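/- Let m ≥ 1 and let A, B, C, D be the matrices over K defined in the context (these are the structure matrices of the rank-1 preprojective representation ₍₂₎N^{(1)}_m of the extended Dynkin quiver D̃_n). Suppose f_1, f_2 ∈ M_{(m+1)×(m+1)}(K), g ∈ M_{(2m+1)×(2m+1)}(K), h_1 ∈ M_{(m+1)×(m+1)}(K) and h_2 ∈ M_{m×m}(K) satisfy f_1 A = A g, f_2 B = B g, g C = C h_1 and g D = D h_2. Then there is a scalar λ ∈ K with f_1 = λ I_{m+1}, f_2 = λ I_{m+1}, g = λ I_{2m+1}, h_1 = λ I_{m+1} and h_2 = λ I_m. In particular the representation ₍₂₎N^{(1)}_m is indecomposable with endomorphism ring K. -/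
import Mathlib


/-- `A = [0 | I_{m+1}] ∈ M_{(m+1)×(2m+1)}` (an `(m+1)×m` zero block followed by `I_{m+1}`). -/
def A17 (K : Type*) [Field K] (m : ℕ) : Matrix (Fin (m + 1)) (Fin (2 * m + 1)) K :=
  Matrix.of fun i j => if (j : ℕ) = (i : ℕ) + m then 1 else 0

/-- `B ∈ M_{(m+1)×(2m+1)}`: first `m` columns `I_m` with one zero row appended below,
last `m+1` columns `I_{m+1}`. -/
def B17 (K : Type*) [Field K] (m : ℕ) : Matrix (Fin (m + 1)) (Fin (2 * m + 1)) K :=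
  Matrix.of fun i j =>
    if ((i : ℕ) = (j : ℕ) ∧ (j : ℕ) < m) ∨ (j : ℕ) = (i : ℕ) + m then 1 else 0

/-- `C ∈ M_{(2m+1)×(m+1)}`: top `m` rows zero, bottom `m+1` rows `I_{m+1}`. -/
def C17 (K : Type*) [Field K] (m : ℕ) : Matrix (Fin (2 * m + 1)) (Fin (m + 1)) K :=
  Matrix.of fun i j => if (i : ℕ) = (j : ℕ) + m then 1 else 0

/-- `D ∈ M_{(2m+1)×m}`: top `m` rows `I_m`, row `m+1` zero, bottom `m` rows `I_m`
(1-based indexing). -/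
def D17 (K : Type*) [Field K] (m : ℕ) : Matrix (Fin (2 * m + 1)) (Fin m) K :=
  Matrix.of fun i j => if (i : ℕ) = (j : ℕ) ∨ (i : ℕ) = (j : ℕ) + (m + 1) then 1 else 0

/-- every endomorphism of the representation `₍₂₎N^{(1)}_m` of `D̃_n` is
scalar; in particular the representation is indecomposable with endomorphism ring `K`. -/

lemma mcast17 {K : Type*} [Field K] {n p : ℕ} (M : Matrix (Fin n) (Fin p) K)
    {x x' y y' : ℕ} (hx : x = x') (hy : y = y')
    {h1 : x < n} {h2 : y < p} {h3 : x' < n} {h4 : y' < p} :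
    M ⟨x, h1⟩ ⟨y, h2⟩ = M ⟨x', h3⟩ ⟨y', h4⟩ := by subst hx; subst hy; rfl

lemma sumZ17 {K : Type*} [Field K] {n : ℕ} {f : Fin n → K} {p : Fin n → Prop}
    [DecidablePred p] (h : ∀ k, ¬ p k) :
    (∑ k, if p k then f k else 0) = 0 := by simp [h]

lemma sumU17 {K : Type*} [Field K] {n : ℕ} {f : Fin n → K} {p : Fin n → Prop}
    [DecidablePred p] (k0 : Fin n) (h : ∀ k, p k ↔ k = k0) :
    (∑ k, if p k then f k else 0) = f k0 := by
  have e : ∀ k : Fin n, (if p k then f k else 0) = if k = k0 then f k else 0 := by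
    intro k; simp [h k]
  simp only [e]
  simp

lemma sumU217 {K : Type*} [Field K] {n : ℕ} {f : Fin n → K} {p : Fin n → Prop}
    [DecidablePred p] (k0 k1 : Fin n) (hne : k0 ≠ k1) (h : ∀ k, p k ↔ (k = k0 ∨ k = k1)) :
    (∑ k, if p k then f k else 0) = f k0 + f k1 := by
  have e : ∀ k : Fin n, (if p k then f k else 0)
      = (if k = k0 then f k else 0) + (if k = k1 then f k else 0) := by
    intro k
    by_cases h0 : k = k0 <;> by_cases h1 : k = k1 <;> simp_all [h k]
  rw [Finset.sum_congr rfl fun k _ => e k, Finset.sum_add_distrib]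
  simp

lemma scalar17 {K : Type*} [Field K] {n : ℕ} (M : Matrix (Fin n) (Fin n) K) (c : K)
    (h : ∀ (x y : ℕ) (hx : x < n) (hy : y < n), M ⟨x, hx⟩ ⟨y, hy⟩ = if x = y then c else 0) :
    M = c • (1 : Matrix (Fin n) (Fin n) K) := by
  ext i j
  rw [Matrix.smul_apply, Matrix.one_apply]
  have h' := h i j i.isLt j.isLt
  simp only [Fin.eta] at h'
  rw [h']
  by_cases e : i = j
  · simp [e]
  · rw [if_neg (fun hh => e (Fin.val_injective hh)), if_neg e, smul_zero]


theorem stmt17 (K : Type*) [Field K] (m : ℕ) (hm : 1 ≤ m)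
    (f1 f2 : Matrix (Fin (m + 1)) (Fin (m + 1)) K)
    (g : Matrix (Fin (2 * m + 1)) (Fin (2 * m + 1)) K)
    (h1 : Matrix (Fin (m + 1)) (Fin (m + 1)) K)
    (h2 : Matrix (Fin m) (Fin m) K)
    (hA : f1 * A17 K m = A17 K m * g)
    (hB : f2 * B17 K m = B17 K m * g)
    (hC : g * C17 K m = C17 K m * h1)
    (hD : g * D17 K m = D17 K m * h2) :
    ∃ lam : K,
      f1 = lam • 1 ∧ f2 = lam • 1 ∧ g = lam • 1 ∧ h1 = lam • 1 ∧ h2 = lam • 1 := by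
  have hA' : ∀ (i : Fin (m+1)) (j : Fin (2*m+1)),
      (∑ k : Fin (m+1), if (j:ℕ) = (k:ℕ) + m then f1 i k else 0)
      = ∑ k : Fin (2*m+1), if (k:ℕ) = (i:ℕ) + m then g k j else 0 := by
    intro i j
    have h := congrFun (congrFun hA i) j
    simpa [Matrix.mul_apply, A17, mul_ite, ite_mul, mul_one, mul_zero, one_mul, zero_mul]
      using h
  have hB' : ∀ (i : Fin (m+1)) (j : Fin (2*m+1)),
      (∑ k : Fin (m+1), if ((k:ℕ) = (j:ℕ) ∧ (j:ℕ) < m) ∨ (j:ℕ) = (k:ℕ) + m then f2 i k else 0)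
      = ∑ k : Fin (2*m+1), if ((i:ℕ) = (k:ℕ) ∧ (k:ℕ) < m) ∨ (k:ℕ) = (i:ℕ) + m then g k j else 0 := by
    intro i j
    have h := congrFun (congrFun hB i) j
    simpa [Matrix.mul_apply, B17, mul_ite, ite_mul, mul_one, mul_zero, one_mul, zero_mul]
      using h
  have hC' : ∀ (i : Fin (2*m+1)) (j : Fin (m+1)),
      (∑ k : Fin (2*m+1), if (k:ℕ) = (j:ℕ) + m then g i k else 0)
      = ∑ k : Fin (m+1), if (i:ℕ) = (k:ℕ) + m then h1 k j else 0 := by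
    intro i j
    have h := congrFun (congrFun hC i) j
    simpa [Matrix.mul_apply, C17, mul_ite, ite_mul, mul_one, mul_zero, one_mul, zero_mul]
      using h
  have hD' : ∀ (i : Fin (2*m+1)) (j : Fin m),
      (∑ k : Fin (2*m+1), if (k:ℕ) = (j:ℕ) ∨ (k:ℕ) = (j:ℕ) + (m+1) then g i k else 0)
      = ∑ k : Fin m, if (i:ℕ) = (k:ℕ) ∨ (i:ℕ) = (k:ℕ) + (m+1) then h2 k j else 0 := by
    intro i j
    have h := congrFun (congrFun hD i) j
    simpa [Matrix.mul_apply, D17, mul_ite, ite_mul, mul_one, mul_zero, one_mul, zero_mul]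
      using h
  -- G1: bottom-left block of g is zero
  have G1 : ∀ (a b : ℕ) (e1 : a + m < 2*m+1) (e2 : b < 2*m+1),
      a ≤ m → b < m → g ⟨a + m, e1⟩ ⟨b, e2⟩ = 0 := by
    intro a b e1 e2 ha hb
    have h := hA' ⟨a, by omega⟩ ⟨b, by omega⟩
    rw [sumZ17 (by intro k; simp; try omega),
        sumU17 ⟨a + m, by omega⟩ (by intro k; simp [Fin.ext_iff]; try omega)] at h
    exact h.symm
  -- G2: top-right block of g is zero
  have G2 : ∀ (a b : ℕ) (e1 : a < 2*m+1) (e2 : b + m < 2*m+1),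
      a < m → b ≤ m → g ⟨a, e1⟩ ⟨b + m, e2⟩ = 0 := by
    intro a b e1 e2 ha hb
    have h := hC' ⟨a, by omega⟩ ⟨b, by omega⟩
    rw [sumU17 ⟨b + m, by omega⟩ (by intro k; simp [Fin.ext_iff]; try omega),
        sumZ17 (by intro k; simp; try omega)] at h
    exact h
  -- F1 : f1 = Q
  have F1 : ∀ (a b : ℕ) (e1 : a < m+1) (e2 : b < m+1),
      f1 ⟨a, e1⟩ ⟨b, e2⟩ = g ⟨a + m, by omega⟩ ⟨b + m, by omega⟩ := by
    intro a b e1 e2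
    have h := hA' ⟨a, by omega⟩ ⟨b + m, by omega⟩
    rw [sumU17 ⟨b, by omega⟩ (by intro k; simp [Fin.ext_iff]; try omega),
        sumU17 ⟨a + m, by omega⟩ (by intro k; simp [Fin.ext_iff]; try omega)] at h
    exact h
  -- H1 : h1 = Q
  have H1 : ∀ (a b : ℕ) (e1 : a < m+1) (e2 : b < m+1),
      h1 ⟨a, e1⟩ ⟨b, e2⟩ = g ⟨a + m, by omega⟩ ⟨b + m, by omega⟩ := by
    intro a b e1 e2
    have h := hC' ⟨a + m, by omega⟩ ⟨b, by omega⟩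
    rw [sumU17 ⟨b + m, by omega⟩ (by intro k; simp [Fin.ext_iff]; try omega),
        sumU17 ⟨a, by omega⟩ (by intro k; simp [Fin.ext_iff]; try omega)] at h
    exact h.symm
  -- F2a : f2 top-left = P
  have F2a : ∀ (a b : ℕ) (e1 : a < m+1) (e2 : b < m+1),
      a < m → b < m → f2 ⟨a, e1⟩ ⟨b, e2⟩ = g ⟨a, by omega⟩ ⟨b, by omega⟩ := by
    intro a b e1 e2 ha hb
    have h := hB' ⟨a, by omega⟩ ⟨b, by omega⟩
    rw [sumU17 ⟨b, by omega⟩ (by intro k; simp [Fin.ext_iff]; try omega),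
        sumU217 ⟨a, by omega⟩ ⟨a + m, by omega⟩ (by simp [Fin.ext_iff]; try omega)
          (by intro k; simp [Fin.ext_iff]; try omega)] at h
    rw [G1 a b (by omega) (by omega) (by omega) hb, add_zero] at h
    exact h
  -- F2c : f2 rows < m equal Q
  have F2c : ∀ (a b : ℕ) (e1 : a < m+1) (e2 : b < m+1),
      a < m → f2 ⟨a, e1⟩ ⟨b, e2⟩ = g ⟨a + m, by omega⟩ ⟨b + m, by omega⟩ := by
    intro a b e1 e2 ha
    have h := hB' ⟨a, by omega⟩ ⟨b + m, by omega⟩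
    rw [sumU17 ⟨b, by omega⟩ (by intro k; simp [Fin.ext_iff]; try omega),
        sumU217 ⟨a, by omega⟩ ⟨a + m, by omega⟩ (by simp [Fin.ext_iff]; try omega)
          (by intro k; simp [Fin.ext_iff]; try omega)] at h
    rw [G2 a b (by omega) (by omega) ha (by omega), zero_add] at h
    exact h
  -- F2b : f2 m-th row, cols < m, is zero
  have F2b : ∀ (b : ℕ) (e1 : m < m+1) (e2 : b < m+1),
      b < m → f2 ⟨m, e1⟩ ⟨b, e2⟩ = 0 := by
    intro b e1 e2 hb
    have h := hB' ⟨m, by omega⟩ ⟨b, by omega⟩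
    rw [sumU17 ⟨b, by omega⟩ (by intro k; simp [Fin.ext_iff]; try omega),
        sumU17 ⟨m + m, by omega⟩ (by intro k; simp [Fin.ext_iff]; try omega)] at h
    rw [h]
    exact G1 m b (by omega) (by omega) le_rfl hb
  -- F2d : f2 m-th row equals Q m-th row
  have F2d : ∀ (b : ℕ) (e1 : m < m+1) (e2 : b < m+1),
      f2 ⟨m, e1⟩ ⟨b, e2⟩ = g ⟨m + m, by omega⟩ ⟨b + m, by omega⟩ := by
    intro b e1 e2
    have h := hB' ⟨m, by omega⟩ ⟨b + m, by omega⟩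
    rw [sumU17 ⟨b, by omega⟩ (by intro k; simp [Fin.ext_iff]; try omega),
        sumU17 ⟨m + m, by omega⟩ (by intro k; simp [Fin.ext_iff]; try omega)] at h
    exact h
  -- PQ : top-left block of g equals top-left of Q
  have PQ : ∀ (a b : ℕ) (e1 : a < 2*m+1) (e2 : b < 2*m+1),
      ∀ (ha : a < m) (hb : b < m), g ⟨a, e1⟩ ⟨b, e2⟩ = g ⟨a + m, by omega⟩ ⟨b + m, by omega⟩ := by
    intro a b e1 e2 ha hb
    exact (F2a a b (by omega) (by omega) ha hb).symm.trans (F2c a b (by omega) (by omega) ha)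
  -- QR : Q m-th row, cols < m, zero
  have QR : ∀ (b : ℕ) (e2 : b + m < 2*m+1) (hb : b < m), g ⟨m + m, by omega⟩ ⟨b + m, e2⟩ = 0 := by
    intro b e2 hb
    exact (F2d b (by omega) (by omega)).symm.trans (F2b b (by omega) (by omega) hb)
  -- H2a : h2 = P
  have H2a : ∀ (a b : ℕ) (e1 : a < m) (e2 : b < m),
      h2 ⟨a, e1⟩ ⟨b, e2⟩ = g ⟨a, by omega⟩ ⟨b, by omega⟩ := by
    intro a b e1 e2
    have h := hD' ⟨a, by omega⟩ ⟨b, by omega⟩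
    rw [sumU217 ⟨b, by omega⟩ ⟨b + 1 + m, by omega⟩ (by simp [Fin.ext_iff]; try omega)
          (by intro k; simp [Fin.ext_iff]; try omega),
        sumU17 ⟨a, by omega⟩ (by intro k; simp [Fin.ext_iff]; try omega)] at h
    rw [G2 a (b+1) (by omega) (by omega) e1 (by omega), add_zero] at h
    exact h.symm
  -- Q0 : Q first row, cols ≥ 1, zero
  have Q0 : ∀ (b : ℕ) (e2 : b + 1 + m < 2*m+1), b < m → g ⟨0 + m, by omega⟩ ⟨b + 1 + m, e2⟩ = 0 := by
    intro b e2 hb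
    have h := hD' ⟨0 + m, by omega⟩ ⟨b, by omega⟩
    rw [sumU217 ⟨b, by omega⟩ ⟨b + 1 + m, by omega⟩ (by simp [Fin.ext_iff]; try omega)
          (by intro k; simp [Fin.ext_iff]; try omega),
        sumZ17 (by intro k; simp; try omega)] at h
    rw [G1 0 b (by omega) (by omega) (by omega) hb, zero_add] at h
    exact h
  -- H2b : h2 = shifted Q
  have H2b : ∀ (a b : ℕ) (e1 : a < m) (e2 : b < m),
      h2 ⟨a, e1⟩ ⟨b, e2⟩ = g ⟨a + 1 + m, by omega⟩ ⟨b + 1 + m, by omega⟩ := by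
    intro a b e1 e2
    have h := hD' ⟨a + 1 + m, by omega⟩ ⟨b, by omega⟩
    rw [sumU217 ⟨b, by omega⟩ ⟨b + 1 + m, by omega⟩ (by simp [Fin.ext_iff]; try omega)
          (by intro k; simp [Fin.ext_iff]; try omega),
        sumU17 ⟨a, by omega⟩ (by intro k; simp [Fin.ext_iff]; try omega)] at h
    rw [G1 (a+1) b (by omega) (by omega) (by omega) e2, zero_add] at h
    exact h.symm
  -- Qdiag : Q constant along diagonals (one step)
  have Qdiag : ∀ (a b : ℕ) (ha : a < m) (hb : b < m),
      g ⟨a + 1 + m, by omega⟩ ⟨b + 1 + m, by omega⟩ = g ⟨a + m, by omega⟩ ⟨b + m, by omega⟩ := by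
    intro a b ha hb
    have h := (H2b a b ha hb).symm.trans (H2a a b ha hb)
    exact h.trans (PQ a b (by omega) (by omega) ha hb)
  -- shift along diagonals
  have shift : ∀ (d a b : ℕ) (ha : a + d ≤ m) (hb : b + d ≤ m),
      g ⟨a + d + m, by omega⟩ ⟨b + d + m, by omega⟩ = g ⟨a + m, by omega⟩ ⟨b + m, by omega⟩ := by
    intro d
    induction d with
    | zero => intro a b ha hb; rfl
    | succ d ih =>
      intro a b ha hb
      have h := Qdiag (a + d) (b + d) (by omega) (by omega)
      exact h.trans (ih a b (by omega) (by omega))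
  -- Q is scalar
  have Qscal : ∀ (a b : ℕ) (e1 : a + m < 2*m+1) (e2 : b + m < 2*m+1) (ha : a ≤ m) (hb : b ≤ m),
      g ⟨a + m, e1⟩ ⟨b + m, e2⟩
        = if a = b then g ⟨0 + m, by omega⟩ ⟨0 + m, by omega⟩ else 0 := by
    intro a b e1 e2 ha hb
    rcases lt_trichotomy a b with hab | hab | hab
    · rw [if_neg (by omega)]
      have h0 : g ⟨a + m, e1⟩ ⟨b + m, e2⟩
          = g ⟨0 + a + m, by omega⟩ ⟨(b - a - 1 + 1) + a + m, by omega⟩ :=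
        mcast17 g (by omega) (by omega)
      rw [h0, shift a 0 (b - a - 1 + 1) (by omega) (by omega)]
      exact Q0 (b - a - 1) (by omega) (by omega)
    · rw [if_pos hab]
      have h0 : g ⟨a + m, e1⟩ ⟨b + m, e2⟩ = g ⟨0 + a + m, by omega⟩ ⟨0 + a + m, by omega⟩ :=
        mcast17 g (by omega) (by omega)
      rw [h0]
      exact shift a 0 0 (by omega) (by omega)
    · rw [if_neg (by omega)]
      have h0 := shift (m - a) a b (by omega) (by omega)
      exact h0.symm.trans ((mcast17 g (show a + (m - a) + m = m + m by omega)
        (show b + (m - a) + m = (b + (m - a)) + m by omega)).trans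
        (QR (b + (m - a)) (by omega) (by omega)))
  -- g is scalar
  have gfull : ∀ (x y : ℕ) (hx : x < 2*m+1) (hy : y < 2*m+1),
      g ⟨x, hx⟩ ⟨y, hy⟩ = if x = y then g ⟨0 + m, by omega⟩ ⟨0 + m, by omega⟩ else 0 := by
    intro x y hx hy
    by_cases hxm : x < m
    · by_cases hym : y < m
      · rw [PQ x y hx hy hxm hym, Qscal x y (by omega) (by omega) (by omega) (by omega)]
      · rw [if_neg (by omega)]
        have h0 : g ⟨x, hx⟩ ⟨y, hy⟩ = g ⟨x, hx⟩ ⟨(y - m) + m, by omega⟩ :=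
          mcast17 g rfl (by omega)
        rw [h0]
        exact G2 x (y - m) hx (by omega) hxm (by omega)
    · by_cases hym : y < m
      · rw [if_neg (by omega)]
        have h0 : g ⟨x, hx⟩ ⟨y, hy⟩ = g ⟨(x - m) + m, by omega⟩ ⟨y, hy⟩ :=
          mcast17 g (by omega) rfl
        rw [h0]
        exact G1 (x - m) y (by omega) hy (by omega) hym
      · have h0 : g ⟨x, hx⟩ ⟨y, hy⟩ = g ⟨(x - m) + m, by omega⟩ ⟨(y - m) + m, by omega⟩ :=
          mcast17 g (by omega) (by omega)
        rw [h0, Qscal (x - m) (y - m) (by omega) (by omega) (by omega) (by omega)]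
        by_cases e : x = y
        · rw [if_pos (by omega), if_pos e]
        · rw [if_neg (by omega), if_neg e]
  have F2full : ∀ (x y : ℕ) (hx2 : x < m+1) (hy2 : y < m+1),
      f2 ⟨x, hx2⟩ ⟨y, hy2⟩ = if x = y then g ⟨0 + m, by omega⟩ ⟨0 + m, by omega⟩ else 0 := by
    intro x y hx2 hy2
    by_cases hxm : x < m
    · exact (F2c x y hx2 hy2 hxm).trans (Qscal x y (by omega) (by omega) (by omega) (by omega))
    · have hx' : x = m := by omega
      by_cases hym : y < m
      · rw [if_neg (by omega)]
        exact (mcast17 f2 hx' rfl).trans (F2b y (by omega) (by omega) hym)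
      · rw [if_pos (show x = y by omega)]
        exact (mcast17 f2 hx' (show y = m by omega)).trans ((F2d m (by omega) (by omega)).trans
          ((Qscal m m (by omega) (by omega) le_rfl le_rfl).trans (if_pos rfl)))
  refine ⟨g ⟨0 + m, by omega⟩ ⟨0 + m, by omega⟩, ?_, ?_, ?_, ?_, ?_⟩
  · exact scalar17 f1 _ fun x y hx hy =>
      (F1 x y hx hy).trans (Qscal x y (by omega) (by omega) (by omega) (by omega))
  · exact scalar17 f2 _ F2full
  · exact scalar17 g _ gfull
  · exact scalar17 h1 _ fun x y hx hy =>
      (H1 x y hx hy).trans (Qscal x y (by omega) (by omega) (by omega) (by omega))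
  · exact scalar17 h2 _ fun x y hx hy =>
      (H2a x y hx hy).trans (gfull x y (by omega) (by omega))
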